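/- Let f, g, h : ℝ → ℂ be continuous and set ω₀ = (g − i·f)/2, ω₁ = (g + i·f)/2, μ = −i·h. Let α, β, γ : ℝ → ℂ be differentiable functions satisfying α' = h·β − g·γ, β' = −h·α + f·γ, γ' = g·α − f·β and α² + β² + γ² = 1, and assume 1 − γ(x) ≠ 0 and α(x) − i·β(x) ≠ 0 for all x. Then u := (α + i·β)/(1 − γ) and v := −(1 − γ)/(α − i·β) both satisfy the Riccati equation θ' = ω₀ + μ·θ + ω₁·θ², and the identities (α + i·β)/(1 − γ) = (1 + γ)/(α − i·β) and −(1 − γ)/(α − i·β) = −(α + i·β)/(1 + γ) hold (the latter wherever 1 + γ ≠ 0). -/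

import Mathlib

set_option maxHeartbeats 1000000 in
/-- Converse direction of Darboux's theorem on orthogonal systems (Theorem 2). -/
theorem darboux_orthogonal_converse
    (f g h α β γ u v : ℝ → ℂ)
    (hf : Continuous f) (hg : Continuous g) (hh : Continuous h)
    (hα : Differentiable ℝ α) (hβ : Differentiable ℝ β) (hγ : Differentiable ℝ γ)
    (h1 : ∀ x, deriv α x = h x * β x - g x * γ x)
    (h2 : ∀ x, deriv β x = -(h x) * α x + f x * γ x)
    (h3 : ∀ x, deriv γ x = g x * α x - f x * β x)
    (hnorm : ∀ x, α x ^ 2 + β x ^ 2 + γ x ^ 2 = 1)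
    (hγ1 : ∀ x, 1 - γ x ≠ 0) (hαβ : ∀ x, α x - Complex.I * β x ≠ 0)
    (hu : ∀ x, u x = (α x + Complex.I * β x) / (1 - γ x))
    (hv : ∀ x, v x = -(1 - γ x) / (α x - Complex.I * β x)) :
    (∀ x, deriv u x = (g x - Complex.I * f x) / 2
        + (-Complex.I * h x) * u x + ((g x + Complex.I * f x) / 2) * u x ^ 2) ∧
    (∀ x, deriv v x = (g x - Complex.I * f x) / 2
        + (-Complex.I * h x) * v x + ((g x + Complex.I * f x) / 2) * v x ^ 2) ∧
    (∀ x, (α x + Complex.I * β x) / (1 - γ x) = (1 + γ x) / (α x - Complex.I * β x)) ∧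
    (∀ x, 1 + γ x ≠ 0 →
      -(1 - γ x) / (α x - Complex.I * β x) = -((α x + Complex.I * β x) / (1 + γ x))) := by
  have hU : u = fun t => (α t + Complex.I * β t) / (1 - γ t) := funext hu
  have hV : v = fun t => -(1 - γ t) / (α t - Complex.I * β t) := funext hv
  refine ⟨?_, ?_, ?_, ?_⟩
  · intro x
    have hnum : HasDerivAt (fun t => α t + Complex.I * β t)
        (deriv α x + Complex.I * deriv β x) x :=
      ((hα x).hasDerivAt).add (((hβ x).hasDerivAt).const_mul Complex.I)
    have hden : HasDerivAt (fun t => 1 - γ t) (-(deriv γ x)) x := by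
      simpa using ((hγ x).hasDerivAt).const_sub 1
    have hD : deriv (fun t => (α t + Complex.I * β t) / (1 - γ t)) x = _ :=
      (hnum.div hden (hγ1 x)).deriv
    simp only [hu]
    rw [hU, hD, h1 x, h2 x, h3 x]
    have hne := hγ1 x
    rw [div_eq_iff (pow_ne_zero 2 hne)]
    have hq : ((α x + Complex.I * β x) / (1 - γ x)) * (1 - γ x) = (α x + Complex.I * β x) := div_mul_cancel₀ _ hne
    linear_combination (((1:ℂ)/2) * g x + ((-1:ℂ)/2) * Complex.I * f x) * hnorm x + ((1) * β x * h x + (-1) * β x * γ x * h x + ((-1:ℂ)/2) * β x ^ 2 * g x + (-1) * α x * β x * f x + ((-1:ℂ)/2) * Complex.I * β x ^ 2 * f x) * Complex.I_sq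
      - ((-Complex.I * h x) * (1 - γ x) + ((g x + Complex.I * f x) / 2) * (((α x + Complex.I * β x) / (1 - γ x)) * (1 - γ x) + (α x + Complex.I * β x))) * hq
  · intro x
    have hnum : HasDerivAt (fun t => -(1 - γ t)) (deriv γ x) x := by
      have := (((hγ x).hasDerivAt).const_sub 1).neg
      rw [neg_neg] at this
      exact this
    have hden : HasDerivAt (fun t => α t - Complex.I * β t)
        (deriv α x - Complex.I * deriv β x) x :=
      ((hα x).hasDerivAt).sub (((hβ x).hasDerivAt).const_mul Complex.I)
    have hD : deriv (fun t => -(1 - γ t) / (α t - Complex.I * β t)) x = _ :=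
      (hnum.div hden (hαβ x)).deriv
    simp only [hv]
    rw [hV, hD, h1 x, h2 x, h3 x]
    have hne := hαβ x
    rw [div_eq_iff (pow_ne_zero 2 hne)]
    have hq : ((-(1 - γ x)) / (α x - Complex.I * β x)) * (α x - Complex.I * β x) = (-(1 - γ x)) := div_mul_cancel₀ _ hne
    linear_combination (((1:ℂ)/2) * g x + ((1:ℂ)/2) * Complex.I * f x) * hnorm x + (((-1:ℂ)/2) * β x ^ 2 * g x + (-1) * α x * β x * f x + ((1:ℂ)/2) * Complex.I * β x ^ 2 * f x + (1) * β x * h x + (-1) * β x * γ x * h x) * Complex.I_sq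
      - ((-Complex.I * h x) * (α x - Complex.I * β x) + ((g x + Complex.I * f x) / 2) * (((-(1 - γ x)) / (α x - Complex.I * β x)) * (α x - Complex.I * β x) + (-(1 - γ x)))) * hq
  · intro x
    rw [div_eq_div_iff (hγ1 x) (hαβ x)]
    linear_combination hnorm x - β x ^ 2 * Complex.I_sq
  · intro x h1γ
    rw [neg_div, neg_inj, div_eq_div_iff (hαβ x) h1γ]
    linear_combination -(hnorm x) + β x ^ 2 * Complex.I_sq
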